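/- Let P be a symmetric idempotent real n×n matrix, M a symmetric positive definite real n×n matrix, μ > 0, and M̄ = P M P + μ (I − P). Then S := I − M M̄⁻¹ P is an oblique projection matrix, i.e., S² = S. -/

import Mathlib

open Matrix

lemma selfdot_nonneg {n : ℕ} (v : Fin n → ℝ) : 0 ≤ v ⬝ᵥ v :=
  Finset.sum_nonneg fun i _ => mul_self_nonneg (v i)

/-- `S = I - M M̄⁻¹ P` is an oblique projection matrix, i.e. `S² = S`, where
`M̄ = PMP + μ(I - P)` is the constraint inertia matrix. -/
theorem stmt_14 (n : ℕ)
    (P M : Matrix (Fin n) (Fin n) ℝ)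
    (hPsymm : Pᵀ = P) (hPidem : P * P = P)
    (hM : M.PosDef) (μ : ℝ) (hμ : 0 < μ)
    (Mbar S : Matrix (Fin n) (Fin n) ℝ)
    (hMbar : Mbar = P * M * P + μ • ((1 : Matrix (Fin n) (Fin n) ℝ) - P))
    (hS : S = 1 - M * Mbar⁻¹ * P) :
    S * S = S := by
  -- Mbar is positive definite
  have hMbarPD : Mbar.PosDef := by
    rw [posDef_iff_dotProduct_mulVec]
    constructor
    · show Mbarᵀ = Mbar
      rw [hMbar]
      have hMsymm : Mᵀ = M := by
        have := hM.1.eq; rwa [conjTranspose_eq_transpose_of_trivial] at this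
      simp [transpose_add, transpose_smul, transpose_mul, hPsymm, hMsymm, mul_assoc]
    · intro x hx
      rw [star_trivial, hMbar]
      have hsplit : (P * M * P + μ • ((1 : Matrix (Fin n) (Fin n) ℝ) - P)) *ᵥ x
          = (P *ᵥ (M *ᵥ (P *ᵥ x))) + μ • (((1 : Matrix (Fin n) (Fin n) ℝ) - P) *ᵥ x) := by
        rw [add_mulVec, smul_mulVec, mulVec_mulVec, mulVec_mulVec]
      rw [hsplit, dotProduct_add, dotProduct_smul]
      have hterm1 : x ⬝ᵥ (P *ᵥ (M *ᵥ (P *ᵥ x))) = (P *ᵥ x) ⬝ᵥ (M *ᵥ (P *ᵥ x)) := by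
        rw [dotProduct_mulVec, ← mulVec_transpose, hPsymm]
      set Q : Matrix (Fin n) (Fin n) ℝ := (1 : Matrix (Fin n) (Fin n) ℝ) - P with hQ
      have hQsymm : Qᵀ = Q := by rw [hQ, transpose_sub, transpose_one, hPsymm]
      have hQidem : Q * Q = Q := by
        rw [hQ, sub_mul, one_mul, mul_sub, mul_one, hPidem]; abel
      have hterm2 : x ⬝ᵥ (Q *ᵥ x) = (Q *ᵥ x) ⬝ᵥ (Q *ᵥ x) := by
        conv_lhs => rw [← hQidem, ← mulVec_mulVec]
        rw [dotProduct_mulVec, ← mulVec_transpose, hQsymm]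
      rw [hterm1, hterm2]
      by_cases hPx : P *ᵥ x = 0
      · have hQx : Q *ᵥ x = x := by rw [hQ, sub_mulVec, one_mulVec, hPx, sub_zero]
        rw [hPx, hQx]
        simp only [mulVec_zero, dotProduct_zero, zero_add]
        have : x ⬝ᵥ x ≠ 0 := fun h => hx (dotProduct_self_eq_zero.mp h)
        have hpos : 0 < x ⬝ᵥ x := lt_of_le_of_ne (selfdot_nonneg x) (Ne.symm this)
        positivity
      · have h1 : 0 < (P *ᵥ x) ⬝ᵥ (M *ᵥ (P *ᵥ x)) := by
          have := hM.dotProduct_mulVec_pos hPx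
          rwa [star_trivial] at this
        have h2 : 0 ≤ (Q *ᵥ x) ⬝ᵥ (Q *ᵥ x) := selfdot_nonneg _
        positivity
  have hUnit : IsUnit Mbar := hMbarPD.isUnit
  have hinv : Mbar * Mbar⁻¹ = 1 := mul_nonsing_inv _ ((isUnit_iff_isUnit_det _).mp hUnit)
  have hinv' : Mbar⁻¹ * Mbar = 1 := nonsing_inv_mul _ ((isUnit_iff_isUnit_det _).mp hUnit)
  -- P commutes with Mbar
  have hcomm : P * Mbar = Mbar * P := by
    rw [hMbar]
    simp only [mul_add, add_mul, mul_smul_comm, smul_mul_assoc, mul_sub, sub_mul, mul_one, one_mul]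
    have l : P * (P * M * P) = P * M * P := by rw [← mul_assoc, ← mul_assoc, hPidem]
    have r : P * M * P * P = P * M * P := by rw [mul_assoc (P * M) P P, hPidem]
    rw [l, r]
  have hcommInv : P * Mbar⁻¹ = Mbar⁻¹ * P := by
    calc P * Mbar⁻¹ = (Mbar⁻¹ * Mbar) * (P * Mbar⁻¹) := by rw [hinv', one_mul]
      _ = Mbar⁻¹ * ((Mbar * P) * Mbar⁻¹) := by noncomm_ring
      _ = Mbar⁻¹ * ((P * Mbar) * Mbar⁻¹) := by rw [hcomm]
      _ = Mbar⁻¹ * P * (Mbar * Mbar⁻¹) := by noncomm_ring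
      _ = Mbar⁻¹ * P := by rw [hinv, mul_one]
  have hPMbar : P * Mbar = P * M * P := by
    rw [hMbar, mul_add, mul_smul_comm, mul_sub, mul_one, hPidem, sub_self, smul_zero, add_zero,
      ← mul_assoc, ← mul_assoc, hPidem]

  -- key identity
  have hkey : P * (M * (Mbar⁻¹ * P)) = P := by
    have h0 : P * M * P * Mbar⁻¹ = P := by
      rw [← hPMbar, mul_assoc P Mbar Mbar⁻¹, hinv, mul_one]
    calc P * (M * (Mbar⁻¹ * P)) = P * M * (Mbar⁻¹ * P) := by noncomm_ring
      _ = P * M * (P * Mbar⁻¹) := by rw [hcommInv]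
      _ = P * M * P * Mbar⁻¹ := by rw [← mul_assoc]
      _ = P := h0
  rw [hS]
  have : M * Mbar⁻¹ * P * (M * Mbar⁻¹ * P) = M * Mbar⁻¹ * P := by
    calc M * Mbar⁻¹ * P * (M * Mbar⁻¹ * P)
        = M * Mbar⁻¹ * (P * (M * (Mbar⁻¹ * P))) := by noncomm_ring
      _ = M * Mbar⁻¹ * P := by rw [hkey]
  rw [sub_mul, mul_sub, mul_sub, mul_one, one_mul, mul_one, this]
  abel
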